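/- arXiv:2308.04705 — 2 statements merged into one kernel-verified Lean document; each statement's English description precedes it below -/
import Mathlib

section
/- Let D be a weighted oriented graph such that every vertex of V^+ is a sink, and let I = I(D). Then the second symbolic power satisfies I^(2) = I^2 + (x_i^{w(x_i)} x_j^{w(x_j)} x_r^{w(x_r)} : {x_i, x_j, x_r} induces a triangle in the underlying graph G). -/
open scoped BigOperators
open MvPolynomial

noncomputable section

/-- A weighted oriented graph on the vertex set `Fin n`: a loopless directed graph
together with a weight function taking values `≥ 1`. -/
structure WOGraph (n : ℕ) where
  adj : Fin n → Fin n → Prop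
  loopless : ∀ i, ¬ adj i i
  w : Fin n → ℕ
  one_le_w : ∀ i, 1 ≤ w i

namespace WOGraph

variable {n : ℕ} (D : WOGraph n)

/-- The underlying simple graph `G` of `D`. -/
def underlying : SimpleGraph (Fin n) where
  Adj i j := D.adj i j ∨ D.adj j i
  symm := ⟨fun _ _ h => h.symm⟩
  loopless := ⟨fun i h => h.elim (D.loopless i) (D.loopless i)⟩

/-- A sink: no edge leaves it. -/
def IsSink (i : Fin n) : Prop := ∀ j, ¬ D.adj i j

/-- A source: no edge enters it. -/
def IsSource (i : Fin n) : Prop := ∀ j, ¬ D.adj j i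

/-- `V⁺`: the set of vertices of non-trivial weight. -/
def Vplus : Set (Fin n) := {i | 2 ≤ D.w i}

/-- Closed neighborhood `N[S]` of a set of vertices in the underlying graph. -/
def nbhd (S : Set (Fin n)) : Set (Fin n) := S ∪ {j | ∃ i ∈ S, D.underlying.Adj i j}

/-- `{i, j, r}` induces a triangle in the underlying graph. -/
def IsTriangle (i j r : Fin n) : Prop :=
  D.underlying.Adj i j ∧ D.underlying.Adj j r ∧ D.underlying.Adj i r

/-- The maximal weight `w = max{w(x) : x ∈ V(D)}`. -/
def maxW : ℕ := Finset.univ.sup D.w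

/-- Gap-free: no two disjoint edges of the underlying graph form an induced matching. -/
def GapFree : Prop := ∀ a b c d : Fin n,
  D.underlying.Adj a b → D.underlying.Adj c d → a ≠ c → a ≠ d → b ≠ c → b ≠ d →
    (D.underlying.Adj a c ∨ D.underlying.Adj a d ∨ D.underlying.Adj b c ∨ D.underlying.Adj b d)

end WOGraph

/-- The polynomial ring `R = K[x_1, …, x_n]`. -/
abbrev MvPoly (n : ℕ) (K : Type*) [Field K] := MvPolynomial (Fin n) K

variable {n : ℕ} (K : Type*) [Field K]

/-- The edge ideal of the induced weighted oriented subgraph of `D` on a vertex subset `U`,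
regarded as an ideal of `K[x_1, …, x_n]`. -/
def edgeIdealOn (D : WOGraph n) (U : Set (Fin n)) : Ideal (MvPoly n K) :=
  Ideal.span {m | ∃ i j, i ∈ U ∧ j ∈ U ∧ D.adj i j ∧ m = X i * X j ^ D.w j}

/-- The edge ideal `I(D) = (x_i x_j^{w(x_j)} : (x_i, x_j) ∈ E(D))`. -/
def edgeIdeal (D : WOGraph n) : Ideal (MvPoly n K) := edgeIdealOn K D Set.univ

/-- The `k`-th symbolic power `I^{(k)} = ⋂_{P ∈ Min(R/I)} (I^k R_P ∩ R)`. -/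
def symbolicPower {R : Type*} [CommRing R] (I : Ideal R) (k : ℕ) : Ideal R :=
  ⨅ (P : Ideal R), ⨅ (hP : P ∈ I.minimalPrimes),
    haveI : P.IsPrime := hP.1.1
    Ideal.comap (algebraMap R (Localization.AtPrime P))
      (Ideal.map (algebraMap R (Localization.AtPrime P)) (I ^ k))

/-! ### Simplicial homology machinery, used to define multigraded Betti numbers of monomial
ideals via upper Koszul simplicial complexes, and thence Castelnuovo–Mumford regularity. -/

/-- The faces of dimension `c` (i.e. of cardinality `c + 1`) of a simplicial complex on `Fin n`. -/
abbrev Face (Δ : Set (Finset (Fin n))) (c : ℤ) : Type _ :=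
  {S : Finset (Fin n) // S ∈ Δ ∧ (S.card : ℤ) = c + 1}

/-- The space of simplicial `c`-chains with coefficients in `K`. -/
abbrev SChain (Δ : Set (Finset (Fin n))) (c : ℤ) : Type _ := Face Δ c → K

open Classical in
/-- Incidence number between faces: `±1` if `T ⊂ S` with `|S \ T| = 1`, else `0`. -/
def inc (S T : Finset (Fin n)) : K :=
  if T ⊆ S ∧ (S \ T).card = 1
  then (-1 : K) ^ (S.filter fun j => ∃ i ∈ S \ T, j < i).card
  else 0

/-- The simplicial boundary map from `c`-chains to `d`-chains (nonzero only when `d = c - 1`). -/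
def bdry (Δ : Set (Finset (Fin n))) (c d : ℤ) : SChain K Δ c →ₗ[K] SChain K Δ d where
  toFun f T := ∑ᶠ S : Face Δ c, inc K S.1 T.1 * f S
  map_add' f g := by
    funext T
    simp only [Pi.add_apply, mul_add]
    exact finsum_add_distrib (Set.toFinite _) (Set.toFinite _)
  map_smul' r f := by
    funext T
    simp only [Pi.smul_apply, smul_eq_mul, RingHom.id_apply]
    rw [mul_finsum _ _]
    exact finsum_congr fun S => by ring

/-- The reduced simplicial homology `H̃_c(Δ; K)` in dimension `c`. -/
abbrev redHomology (Δ : Set (Finset (Fin n))) (c : ℤ) : Type _ :=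
  LinearMap.ker (bdry K Δ c (c - 1)) ⧸
    Submodule.comap (LinearMap.ker (bdry K Δ c (c - 1))).subtype
      (LinearMap.range (bdry K Δ (c + 1) c))

/-- The upper Koszul simplicial complex `K^a(I)` of a monomial ideal `I` in degree `a`. -/
def upperKoszul (I : Ideal (MvPoly n K)) (a : Fin n →₀ ℕ) : Set (Finset (Fin n)) :=
  {S | (∀ i ∈ S, 1 ≤ a i) ∧
    (monomial (a - ∑ i ∈ S, Finsupp.single i 1) (1 : K)) ∈ I}

/-- The multigraded Betti number `β_{i,a}(I) = dim_K H̃_{i-1}(K^a(I); K)` of a monomial ideal. -/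
def bettiMulti (I : Ideal (MvPoly n K)) (i : ℕ) (a : Fin n →₀ ℕ) : ℕ :=
  Module.finrank K (redHomology K (upperKoszul K I a) ((i : ℤ) - 1))

/-- The graded Betti number `β_{i,j}(I) = ∑_{|a| = j} β_{i,a}(I)` of a monomial ideal. -/
def betti (I : Ideal (MvPoly n K)) (i j : ℕ) : ℕ :=
  ∑ᶠ (a : Fin n →₀ ℕ) (_ : (∑ v, a v) = j), bettiMulti K I i a

/-- Castelnuovo–Mumford regularity `reg(I) = max{j - i : β_{i,j}(I) ≠ 0}` of a monomial ideal. -/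
def reg (I : Ideal (MvPoly n K)) : ℕ :=
  sSup {d : ℕ | ∃ i j : ℕ, betti K I i j ≠ 0 ∧ j = d + i}

/-- `f` is a monomial (with coefficient 1). -/
def IsMonomial (f : MvPoly n K) : Prop := ∃ e : Fin n →₀ ℕ, f = monomial e 1

/-- `f` is a minimal monomial generator of the monomial ideal `J`. -/
def IsMinGen (J : Ideal (MvPoly n K)) (f : MvPoly n K) : Prop :=
  IsMonomial K f ∧ f ∈ J ∧ ∀ g : MvPoly n K, IsMonomial K g → g ∈ J → g ∣ f → g = f

end
noncomputable section
namespace SP16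
open MvPolynomial
open scoped Classical

variable {n : ℕ}

/-- upward closedness for sets of exponents -/
def Up (E : Set (Fin n →₀ ℕ)) : Prop := ∀ ⦃a b : Fin n →₀ ℕ⦄, a ∈ E → a ≤ b → b ∈ E

def up (G : Set (Fin n →₀ ℕ)) : Set (Fin n →₀ ℕ) := {d | ∃ g ∈ G, g ≤ d}

lemma up_Up (G : Set (Fin n →₀ ℕ)) : Up (up G) :=
  fun _ b h hab => h.elim fun g hg => ⟨g, hg.1, hg.2.trans hab⟩

lemma subset_up (G : Set (Fin n →₀ ℕ)) : G ⊆ up G := fun g hg => ⟨g, hg, le_rfl⟩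

/-- restriction of an exponent to a set of variables -/
def rC (C : Set (Fin n)) (d : Fin n →₀ ℕ) : Fin n →₀ ℕ := d.filter (· ∈ C)

lemma rC_apply (C : Set (Fin n)) (d : Fin n →₀ ℕ) (v : Fin n) :
    rC C d v = if v ∈ C then d v else 0 := by
  simp [rC, Finsupp.filter_apply]

lemma rC_add (C : Set (Fin n)) (a b : Fin n →₀ ℕ) : rC C (a + b) = rC C a + rC C b :=
  Finsupp.filter_add

lemma rC_le (C : Set (Fin n)) (d : Fin n →₀ ℕ) : rC C d ≤ d := by
  intro v
  rw [rC_apply]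
  split <;> simp

lemma rC_mono (C : Set (Fin n)) {a b : Fin n →₀ ℕ} (h : a ≤ b) : rC C a ≤ rC C b := by
  intro v
  rw [rC_apply, rC_apply]
  split <;> [exact h v; simp]

lemma rC_eq_zero_iff (C : Set (Fin n)) (d : Fin n →₀ ℕ) :
    rC C d = 0 ↔ ∀ v ∈ C, d v = 0 := by
  constructor
  · intro h v hv
    have := congrArg (fun f : Fin n →₀ ℕ => f v) h
    simpa [rC_apply, hv] using this
  · intro h
    ext v
    rw [rC_apply]
    split
    · exact h v ‹_›
    · rfl

variable (K : Type*) [Field K]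

/-- the "monomial ideal" spanned by the monomials with exponents in `E` -/
def monIdeal (E : Set (Fin n →₀ ℕ)) : Ideal (MvPoly n K) :=
  Ideal.span ((fun d => (monomial d 1 : MvPoly n K)) '' E)

lemma monomial_mem_monIdeal {E : Set (Fin n →₀ ℕ)} {d : Fin n →₀ ℕ} (hd : d ∈ E) (c : K) :
    monomial d c ∈ monIdeal K E := by
  have h1 : (monomial d 1 : MvPoly n K) ∈ monIdeal K E :=
    Ideal.subset_span ⟨d, hd, rfl⟩
  have : (monomial d c : MvPoly n K) = C c * monomial d 1 := by
    rw [C_mul_monomial, mul_one]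
  rw [this]
  exact Ideal.mul_mem_left _ _ h1

lemma mem_monIdeal {E : Set (Fin n →₀ ℕ)} (hE : Up E) {f : MvPoly n K} :
    f ∈ monIdeal K E ↔ ∀ d ∈ f.support, d ∈ E := by
  constructor
  · intro hf
    induction hf using Submodule.span_induction with
    | mem x hx =>
      obtain ⟨g, hg, rfl⟩ := hx
      intro d hd
      rw [support_monomial] at hd
      simp only [one_ne_zero, if_false, Finset.mem_singleton] at hd
      exact hd ▸ hg
    | zero => simp
    | add x y _ _ hx hy =>
      intro d hd
      rcases Finset.mem_union.1 (MvPolynomial.support_add hd) with h | h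
      · exact hx d h
      · exact hy d h
    | smul g x _ hx =>
      intro d hd
      have := MvPolynomial.support_mul g x hd
      obtain ⟨a, _, b, hb, rfl⟩ := Finset.mem_add.1 this
      exact hE (hx b hb) le_add_self
  · intro h
    rw [← support_sum_monomial_coeff f]
    exact Ideal.sum_mem _ fun d hd => monomial_mem_monIdeal K (h d hd) _

lemma monIdeal_mono {E E' : Set (Fin n →₀ ℕ)} (h : E ⊆ E') : monIdeal K E ≤ monIdeal K E' :=
  Ideal.span_mono (Set.image_mono h)

end SP16
end
noncomputable section
namespace SP16
open MvPolynomial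
open scoped Classical

variable {n : ℕ} (K : Type*) [Field K]

/-- the prime generated by the variables in `C` -/
def PC (C : Set (Fin n)) : Ideal (MvPoly n K) :=
  Ideal.span ((fun v => (X v : MvPoly n K)) '' C)

/-- kill the variables in `C` -/
def rho (C : Set (Fin n)) : MvPoly n K →ₐ[K] MvPoly n K :=
  aeval (fun v => if v ∈ C then 0 else X v)

lemma rho_monomial (C : Set (Fin n)) (d : Fin n →₀ ℕ) (c : K) :
    rho K C (monomial d c) = if rC C d = 0 then monomial d c else 0 := by
  rw [rho, aeval_monomial]
  split
  · rename_i h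
    rw [rC_eq_zero_iff] at h
    have : (d.prod fun i k => (if i ∈ C then (0 : MvPoly n K) else X i) ^ k)
        = d.prod fun i k => (X i) ^ k := by
      apply Finsupp.prod_congr
      intro i hi
      have : i ∉ C := fun hiC => (Finsupp.mem_support_iff.1 hi) (h i hiC)
      rw [if_neg this]
    rw [this, monomial_eq, algebraMap_eq]
  · rename_i h
    rw [rC_eq_zero_iff] at h
    push_neg at h
    obtain ⟨v, hvC, hdv⟩ := h
    have hv : v ∈ d.support := Finsupp.mem_support_iff.2 hdv
    have : (d.prod fun i k => (if i ∈ C then (0 : MvPoly n K) else X i) ^ k) = 0 := by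
      apply Finset.prod_eq_zero hv
      show (if v ∈ C then (0 : MvPoly n K) else X v) ^ (d v) = 0
      rw [if_pos hvC, zero_pow hdv]
    rw [this, mul_zero]

lemma coeff_rho (C : Set (Fin n)) (f : MvPoly n K) (u : Fin n →₀ ℕ) :
    coeff u (rho K C f) = if rC C u = 0 then coeff u f else 0 := by
  conv_lhs => rw [← support_sum_monomial_coeff f]
  rw [map_sum]
  rw [MvPolynomial.coeff_sum]
  have : ∀ d ∈ f.support, coeff u (rho K C (monomial d (coeff d f)))
      = if d = u then (if rC C d = 0 then coeff d f else 0) else 0 := by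
    intro d _
    rw [rho_monomial]
    by_cases h1 : rC C d = 0
    · rw [if_pos h1, coeff_monomial]
      by_cases h2 : d = u
      · rw [if_pos h2, if_pos h2, if_pos (h2 ▸ h1)]
      · rw [if_neg h2, if_neg h2]
    · rw [if_neg h1, coeff_zero]
      by_cases h2 : d = u
      · rw [if_pos h2, if_neg h1]
      · rw [if_neg h2]
  rw [Finset.sum_congr rfl this, Finset.sum_ite_eq' f.support u
    (fun d => if rC C d = 0 then coeff d f else 0)]
  by_cases hu : u ∈ f.support
  · rw [if_pos hu]
  · rw [if_neg hu]
    have h0 : coeff u f = 0 := MvPolynomial.notMem_support_iff.1 hu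
    rw [h0]
    simp

lemma rho_eq_zero_of_mem (C : Set (Fin n)) {f : MvPoly n K} (hf : f ∈ PC K C) :
    rho K C f = 0 := by
  induction hf using Submodule.span_induction with
  | mem x hx =>
    obtain ⟨v, hv, rfl⟩ := hx
    simp [rho, hv]
  | zero => simp
  | add x y _ _ hx hy => rw [map_add, hx, hy, add_zero]
  | smul g x _ hx => rw [smul_eq_mul, map_mul, hx, mul_zero]

lemma sub_rho_mem (C : Set (Fin n)) (f : MvPoly n K) : f - rho K C f ∈ PC K C := by
  induction f using MvPolynomial.induction_on with
  | C a => simp [rho]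
  | add p q hp hq =>
    rw [map_add]
    have : p + q - (rho K C p + rho K C q) = (p - rho K C p) + (q - rho K C q) := by ring
    rw [this]
    exact Ideal.add_mem _ hp hq
  | mul_X p v hp =>
    rw [map_mul]
    by_cases hv : v ∈ C
    · have hX : (X v : MvPoly n K) ∈ PC K C := Ideal.subset_span ⟨v, hv, rfl⟩
      have : rho K C (X v) = 0 := by simp [rho, hv]
      rw [this, mul_zero, sub_zero]
      exact Ideal.mul_mem_left _ _ hX
    · have : rho K C (X v) = X v := by simp [rho, hv]
      rw [this]
      have : p * X v - rho K C p * X v = (p - rho K C p) * X v := by ring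
      rw [this]
      exact Ideal.mul_mem_right _ _ hp

lemma mem_PC_iff_rho (C : Set (Fin n)) (f : MvPoly n K) :
    f ∈ PC K C ↔ rho K C f = 0 := by
  constructor
  · exact rho_eq_zero_of_mem K C
  · intro h
    have := sub_rho_mem K C f
    rwa [h, sub_zero] at this

lemma PC_isPrime (C : Set (Fin n)) : (PC K C).IsPrime := by
  have : PC K C = RingHom.ker (rho K C).toRingHom := by
    ext f
    rw [mem_PC_iff_rho, RingHom.mem_ker, AlgHom.toRingHom_eq_coe, RingHom.coe_coe]
  rw [this]
  exact RingHom.ker_isPrime _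

lemma mem_PC_iff (C : Set (Fin n)) (f : MvPoly n K) :
    f ∈ PC K C ↔ ∀ d ∈ f.support, rC C d ≠ 0 := by
  rw [mem_PC_iff_rho, MvPolynomial.ext_iff]
  constructor
  · intro h d hd hrC
    have := h d
    rw [coeff_rho, if_pos hrC, coeff_zero] at this
    exact (MvPolynomial.mem_support_iff.1 hd) this
  · intro h u
    rw [coeff_rho, coeff_zero]
    split
    · by_contra hne
      exact h u (MvPolynomial.mem_support_iff.2 hne) ‹_›
    · rfl

lemma X_mem_PC_iff (C : Set (Fin n)) (v : Fin n) :
    (X v : MvPoly n K) ∈ PC K C ↔ v ∈ C := by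
  constructor
  · intro h
    rw [mem_PC_iff] at h
    have hs : Finsupp.single v 1 ∈ (X v : MvPoly n K).support := by
      rw [support_X]; simp
    have := h _ hs
    rw [Ne, rC_eq_zero_iff] at this
    push_neg at this
    obtain ⟨u, huC, hu⟩ := this
    have : u = v := by
      by_contra hne
      rw [Finsupp.single_apply, if_neg (Ne.symm hne)] at hu
      exact hu rfl
    exact this ▸ huC
  · intro hv
    exact Ideal.subset_span ⟨v, hv, rfl⟩

lemma monomial_not_mem_PC (C : Set (Fin n)) {b : Fin n →₀ ℕ} (hb : rC C b = 0) :
    (monomial b 1 : MvPoly n K) ∉ PC K C := by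
  rw [mem_PC_iff]
  push_neg
  refine ⟨b, ?_, hb⟩
  rw [support_monomial]
  simp

end SP16
end
noncomputable section
namespace SP16
open MvPolynomial
open scoped Classical

variable {n : ℕ} (K : Type*) [Field K]

/-- saturation of a set of exponents with respect to the variables outside `C` -/
def satC (C : Set (Fin n)) (E : Set (Fin n →₀ ℕ)) : Set (Fin n →₀ ℕ) :=
  {d | ∃ b, rC C b = 0 ∧ d + b ∈ E}

lemma rC_zero (C : Set (Fin n)) : rC C (0 : Fin n →₀ ℕ) = 0 := by
  rw [rC_eq_zero_iff]; intro v _; rfl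

lemma subset_satC (C : Set (Fin n)) (E : Set (Fin n →₀ ℕ)) : E ⊆ satC C E :=
  fun d hd => ⟨0, rC_zero C, by rwa [add_zero]⟩

lemma satC_Up (C : Set (Fin n)) {E : Set (Fin n →₀ ℕ)} (hE : Up E) : Up (satC C E) := by
  rintro a b ⟨c, hc, hac⟩ hab
  exact ⟨c, hc, hE hac (add_le_add hab (le_refl c))⟩

lemma satC_sat (C : Set (Fin n)) (E : Set (Fin n →₀ ℕ)) :
    ∀ (d b : Fin n →₀ ℕ), rC C b = 0 → d + b ∈ satC C E → d ∈ satC C E := by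
  rintro d b hb ⟨c, hc, hdc⟩
  refine ⟨b + c, ?_, by rwa [← add_assoc]⟩
  rw [rC_add, hb, hc, add_zero]

/-- the part of `f` supported on exponents satisfying `p` -/
def filterPart (p : (Fin n →₀ ℕ) → Prop) (f : MvPoly n K) : MvPoly n K :=
  ∑ d ∈ f.support.filter p, monomial d (coeff d f)

lemma coeff_filterPart (p : (Fin n →₀ ℕ) → Prop) (f : MvPoly n K) (u : Fin n →₀ ℕ) :
    coeff u (filterPart K p f) = if p u then coeff u f else 0 := by
  rw [filterPart, MvPolynomial.coeff_sum]
  have : ∀ d ∈ f.support.filter p, coeff u (monomial d (coeff d f))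
      = if d = u then coeff d f else 0 := fun d _ => coeff_monomial u d (coeff d f)
  rw [Finset.sum_congr rfl this, Finset.sum_ite_eq' (f.support.filter p) u (fun d => coeff d f)]
  by_cases hp : p u
  · by_cases hu : u ∈ f.support
    · rw [if_pos (Finset.mem_filter.2 ⟨hu, hp⟩), if_pos hp]
    · rw [if_pos hp]
      have h0 : coeff u f = 0 := MvPolynomial.notMem_support_iff.1 hu
      rw [h0]
      simp
  · rw [if_neg hp, if_neg (fun h => hp (Finset.mem_filter.1 h).2)]

lemma filterPart_mem_support {p : (Fin n →₀ ℕ) → Prop} {f : MvPoly n K} {u : Fin n →₀ ℕ}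
    (hu : u ∈ (filterPart K p f).support) : p u ∧ u ∈ f.support := by
  have := MvPolynomial.mem_support_iff.1 hu
  rw [coeff_filterPart] at this
  by_cases hp : p u
  · rw [if_pos hp] at this
    exact ⟨hp, MvPolynomial.mem_support_iff.2 this⟩
  · rw [if_neg hp] at this
    exact absurd rfl this

/-- Main lemma: elements outside `PC C` are nonzerodivisors modulo a monomial ideal whose
exponent set is upward closed and saturated in the directions outside `C`. -/
lemma mem_monIdeal_of_mul_mem {C : Set (Fin n)} {E : Set (Fin n →₀ ℕ)} (hE : Up E)
    (hsat : ∀ (d b : Fin n →₀ ℕ), rC C b = 0 → d + b ∈ E → d ∈ E) :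
    ∀ (N : ℕ) (s f : MvPoly n K), f.support.card ≤ N → s ∉ PC K C →
      s * f ∈ monIdeal K E → f ∈ monIdeal K E := by
  intro N
  induction N with
  | zero =>
    intro s f hcard _ _
    have : f.support = ∅ := Finset.card_eq_zero.1 (Nat.le_zero.1 hcard)
    rw [mem_monIdeal K hE]
    intro d hd
    rw [this] at hd
    exact absurd hd (Finset.notMem_empty d)
  | succ N ih =>
    intro s f hcard hs hsf
    by_cases hf0 : f = 0
    · rw [hf0]; exact Ideal.zero_mem _
    -- pick a minimal C-multidegree δ occurring in f
    have hΔne : (f.support.image (rC C)).Nonempty :=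
      (Finset.image_nonempty).2 (MvPolynomial.support_nonempty.2 hf0)
    obtain ⟨δ, hδmem, hδmin⟩ : ∃ δ ∈ f.support.image (rC C), ∀ x ∈ f.support.image (rC C), ¬ x < δ := by
        obtain ⟨m, hm⟩ := (f.support.image (rC C) : Set (Fin n →₀ ℕ)).toFinite.exists_minimal
          (Finset.coe_nonempty.2 hΔne)
        exact ⟨m, hm.1, fun x hx hlt => hm.not_lt hx hlt⟩
    obtain ⟨d₀, hd₀supp, hd₀δ⟩ := Finset.mem_image.1 hδmem
    set fm : MvPoly n K := filterPart K (fun d => rC C d = δ) f with hfm_def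
    set s0 : MvPoly n K := filterPart K (fun d => rC C d = 0) s with hs0_def
    have hfm_ne : fm ≠ 0 := by
      intro h
      have := coeff_filterPart K (fun d => rC C d = δ) f d₀
      rw [← hfm_def, h, coeff_zero, if_pos hd₀δ] at this
      exact (MvPolynomial.mem_support_iff.1 hd₀supp) this.symm
    have hs0_ne : s0 ≠ 0 := by
      rw [mem_PC_iff] at hs
      push_neg at hs
      obtain ⟨a₀, ha₀supp, ha₀⟩ := hs
      intro h
      have := coeff_filterPart K (fun d => rC C d = 0) s a₀
      rw [← hs0_def, h, coeff_zero, if_pos ha₀] at this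
      exact (MvPolynomial.mem_support_iff.1 ha₀supp) this.symm
    -- the key coefficient identity
    have hkey : ∀ u : Fin n →₀ ℕ, rC C u = δ → coeff u (s * f) = coeff u (s0 * fm) := by
      intro u hu
      rw [MvPolynomial.coeff_mul, MvPolynomial.coeff_mul]
      apply Finset.sum_congr rfl
      rintro ⟨a, d⟩ had
      have had' : a + d = u := Finset.HasAntidiagonal.mem_antidiagonal.1 had
      simp only []
      by_cases h2 : rC C d = δ
      · have ha0 : rC C a = 0 := by
          have : rC C a + rC C d = δ := by rw [← rC_add, had', hu]
          rw [h2] at this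
          exact add_eq_right.1 this
        rw [coeff_filterPart, coeff_filterPart, if_pos h2, if_pos ha0]
      · have hdf : coeff d f = 0 := by
          by_contra hne
          have hdsupp : d ∈ f.support := MvPolynomial.mem_support_iff.2 hne
          have hle : rC C d ≤ δ := by
            have : d ≤ u := had' ▸ le_add_self
            exact hu ▸ rC_mono C this
          exact hδmin (rC C d) (Finset.mem_image_of_mem _ hdsupp) (lt_of_le_of_ne hle h2)
        rw [coeff_filterPart, coeff_filterPart, if_neg h2, hdf, mul_zero, mul_zero]
    have hsupp_s0 : ∀ a ∈ s0.support, rC C a = 0 := fun a ha =>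
      (filterPart_mem_support K ha).1
    have hsupp_fm : ∀ d ∈ fm.support, rC C d = δ ∧ d ∈ f.support := fun d hd =>
      ⟨(filterPart_mem_support K hd).1, (filterPart_mem_support K hd).2⟩
    -- every monomial of s0 * fm is in E
    have hE_of_mem : ∀ u ∈ (s0 * fm).support, u ∈ E := by
      intro u hu
      obtain ⟨a, ha, d, hd, rfl⟩ := Finset.mem_add.1 (MvPolynomial.support_mul s0 fm hu)
      have hrCu : rC C (a + d) = δ := by
        rw [rC_add, hsupp_s0 a ha, (hsupp_fm d hd).1, zero_add]
      have : coeff (a + d) (s * f) ≠ 0 := by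
        rw [hkey _ hrCu]
        exact MvPolynomial.mem_support_iff.1 hu
      have husf : (a + d) ∈ (s * f).support := MvPolynomial.mem_support_iff.2 this
      exact (mem_monIdeal K hE).1 hsf _ husf
    -- fm is in the monomial ideal
    have hfm_mem : fm ∈ monIdeal K E := by
      rw [mem_monIdeal K hE]
      intro d hd
      obtain ⟨hdδ, _⟩ := hsupp_fm d hd
      have hprod_ne : s0 * fm ≠ 0 := mul_ne_zero hs0_ne hfm_ne
      obtain ⟨u₀, hu₀⟩ := MvPolynomial.support_nonempty.2 hprod_ne
      have hu₀E : u₀ ∈ E := hE_of_mem u₀ hu₀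
      obtain ⟨a₀, ha₀, e₀, he₀, rfl⟩ := Finset.mem_add.1 (MvPolynomial.support_mul s0 fm hu₀)
      have ha₀0 : rC C a₀ = 0 := hsupp_s0 a₀ ha₀
      have he₀δ : rC C e₀ = δ := (hsupp_fm e₀ he₀).1
      -- b := a₀ + (e₀ - δ)
      set b : Fin n →₀ ℕ := a₀ + (e₀ - δ) with hb_def
      have hrCb : rC C b = 0 := by
        rw [hb_def, rC_add, ha₀0, zero_add, rC_eq_zero_iff]
        intro v hv
        have h1 : δ v = e₀ v := by
          rw [← he₀δ, rC_apply, if_pos hv]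
        rw [Finsupp.tsub_apply, h1, Nat.sub_self]
      have hle : a₀ + e₀ ≤ d + b := by
        intro v
        have hδd : δ v ≤ d v := by
          have : rC C d ≤ d := rC_le C d
          rw [← hdδ]; exact this v
        have hδe : δ v ≤ e₀ v := by
          have : rC C e₀ ≤ e₀ := rC_le C e₀
          rw [← he₀δ]; exact this v
        simp only [hb_def, Finsupp.add_apply, Finsupp.tsub_apply]
        omega
      exact hsat d b hrCb (hE hu₀E hle)
    -- recurse on f - fm
    have hsub : s * (f - fm) ∈ monIdeal K E := by
      rw [mul_sub]
      exact Ideal.sub_mem _ hsf (Ideal.mul_mem_left _ s hfm_mem)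
    have hsupp_sub : (f - fm).support ⊆ f.support.erase d₀ := by
      intro u hu
      have hne : coeff u f - coeff u fm ≠ 0 := by
        have := MvPolynomial.mem_support_iff.1 hu
        rwa [MvPolynomial.coeff_sub] at this
      rw [coeff_filterPart] at hne
      by_cases hp : rC C u = δ
      · rw [if_pos hp, sub_self] at hne
        exact absurd rfl hne
      · rw [if_neg hp, sub_zero] at hne
        refine Finset.mem_erase.2 ⟨?_, MvPolynomial.mem_support_iff.2 hne⟩
        intro h
        exact hp (h ▸ hd₀δ)
    have hcard' : (f - fm).support.card ≤ N := by
      have h1 := Finset.card_le_card hsupp_sub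
      have h2 : (f.support.erase d₀).card = f.support.card - 1 :=
        Finset.card_erase_of_mem hd₀supp
      omega
    have := ih s (f - fm) hcard' hs hsub
    have hff : f = (f - fm) + fm := by ring
    rw [hff]
    exact Ideal.add_mem _ this hfm_mem

end SP16
end
noncomputable section
namespace SP16
open MvPolynomial
open scoped Classical

variable {n : ℕ}

/-! ### Covers and independent sets -/

def Cover (D : WOGraph n) (C : Set (Fin n)) : Prop := ∀ ⦃i j⦄, D.adj i j → i ∈ C ∨ j ∈ C

def MinCover (D : WOGraph n) (C : Set (Fin n)) : Prop :=
  Cover D C ∧ ∀ v ∈ C, ¬ Cover D (C \ {v})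

lemma Cover.mono {D : WOGraph n} {C C' : Set (Fin n)} (h : Cover D C) (hsub : C ⊆ C') :
    Cover D C' := fun _ _ hadj => (h hadj).imp (@hsub _) (@hsub _)

lemma exists_minCover_subset_aux (D : WOGraph n) :
    ∀ (N : ℕ) (C : Set (Fin n)), C.ncard ≤ N → Cover D C → ∃ C', C' ⊆ C ∧ MinCover D C' := by
  intro N
  induction N with
  | zero =>
    intro C hcard hC
    have : C = ∅ := by
      rw [← Set.ncard_eq_zero (Set.toFinite C)]
      omega
    refine ⟨C, subset_rfl, hC, ?_⟩
    intro v hv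
    rw [this] at hv
    exact absurd hv (Set.notMem_empty v)
  | succ N ih =>
    intro C hcard hC
    by_cases hmin : ∀ v ∈ C, ¬ Cover D (C \ {v})
    · exact ⟨C, subset_rfl, hC, hmin⟩
    · push_neg at hmin
      obtain ⟨v, hv, hcov⟩ := hmin
      have hlt : (C \ {v}).ncard < C.ncard :=
        Set.ncard_diff_singleton_lt_of_mem hv (Set.toFinite C)
      obtain ⟨C', hsub, hC'⟩ := ih (C \ {v}) (by omega) hcov
      exact ⟨C', hsub.trans Set.diff_subset, hC'⟩

lemma exists_minCover_subset (D : WOGraph n) {C : Set (Fin n)} (hC : Cover D C) :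
    ∃ C', C' ⊆ C ∧ MinCover D C' :=
  exists_minCover_subset_aux D C.ncard C le_rfl hC

def Indep (D : WOGraph n) (A : Set (Fin n)) : Prop :=
  ∀ ⦃i⦄, i ∈ A → ∀ ⦃j⦄, j ∈ A → ¬ D.underlying.Adj i j

def MaxIndep (D : WOGraph n) (A : Set (Fin n)) : Prop :=
  Indep D A ∧ ∀ v, v ∉ A → ∃ u ∈ A, D.underlying.Adj v u

lemma exists_maxIndep_superset_aux (D : WOGraph n) :
    ∀ (N : ℕ) (A : Set (Fin n)), Aᶜ.ncard ≤ N → Indep D A → ∃ B, A ⊆ B ∧ MaxIndep D B := by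
  intro N
  induction N with
  | zero =>
    intro A hcard hA
    refine ⟨A, subset_rfl, hA, ?_⟩
    intro v hv
    have : Aᶜ = ∅ := by
      rw [← Set.ncard_eq_zero (Set.toFinite _)]
      omega
    exact absurd (this ▸ hv : v ∈ (∅ : Set (Fin n))) (Set.notMem_empty v)
  | succ N ih =>
    intro A hcard hA
    by_cases hmax : ∀ v, v ∉ A → ∃ u ∈ A, D.underlying.Adj v u
    · exact ⟨A, subset_rfl, hA, hmax⟩
    · push_neg at hmax
      obtain ⟨v, hv, hnadj⟩ := hmax
      have hA' : Indep D (insert v A) := by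
        intro i hi j hj hadj
        rcases Set.mem_insert_iff.1 hi with hii | hii
        · rcases Set.mem_insert_iff.1 hj with hjj | hjj
          · subst hii; subst hjj; exact D.underlying.loopless.irrefl _ hadj
          · subst hii; exact hnadj j hjj hadj
        · rcases Set.mem_insert_iff.1 hj with hjj | hjj
          · subst hjj; exact hnadj i hii hadj.symm
          · exact hA hii hjj hadj
      have hcompl : (insert v A)ᶜ = Aᶜ \ {v} := by
        ext u
        simp [Set.mem_insert_iff, and_comm, or_comm]
      have hvc : v ∈ Aᶜ := hv
      have hlt : (insert v A)ᶜ.ncard < Aᶜ.ncard := by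
        rw [hcompl]
        exact Set.ncard_diff_singleton_lt_of_mem hvc (Set.toFinite _)
      obtain ⟨B, hsub, hB⟩ := ih (insert v A) (by omega) hA'
      exact ⟨B, (Set.subset_insert v A).trans hsub, hB⟩

lemma exists_maxIndep_superset (D : WOGraph n) {A : Set (Fin n)} (hA : Indep D A) :
    ∃ B, A ⊆ B ∧ MaxIndep D B :=
  exists_maxIndep_superset_aux D Aᶜ.ncard A le_rfl hA

lemma maxIndep_compl_minCover {D : WOGraph n} {A : Set (Fin n)} (hA : MaxIndep D A) :
    MinCover D Aᶜ := by
  constructor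
  · intro i j hadj
    by_contra h
    push_neg at h
    have hi : i ∈ A := by
      have := h.1; simpa using this
    have hj : j ∈ A := by
      have := h.2; simpa using this
    exact hA.1 hi hj (Or.inl hadj)
  · intro v hv hcov
    obtain ⟨u, huA, hadj⟩ := hA.2 v hv
    have hu : u ∉ Aᶜ \ {v} := by
      intro h
      exact h.1 huA
    have hv' : v ∉ Aᶜ \ {v} := by
      intro h
      exact h.2 rfl
    rcases hadj with h1 | h1
    · rcases hcov h1 with h | h
      · exact hv' h
      · exact hu h
    · rcases hcov h1 with h | h
      · exact hu h
      · exact hv' h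

/-! ### Generator exponents -/

def uexp (D : WOGraph n) (i j : Fin n) : Fin n →₀ ℕ :=
  Finsupp.single i 1 + Finsupp.single j (D.w j)

def wexp (D : WOGraph n) (i j : Fin n) : Fin n →₀ ℕ :=
  Finsupp.single i (D.w i) + Finsupp.single j (D.w j)

def Gens1 (D : WOGraph n) : Set (Fin n →₀ ℕ) := {e | ∃ i j, D.adj i j ∧ e = uexp D i j}

def Gens2 (D : WOGraph n) : Set (Fin n →₀ ℕ) :=
  {e | ∃ g1 ∈ Gens1 D, ∃ g2 ∈ Gens1 D, e = g1 + g2}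

def TriExp (D : WOGraph n) : Set (Fin n →₀ ℕ) :=
  {e | ∃ i j r, D.IsTriangle i j r ∧
    e = Finsupp.single i (D.w i) + Finsupp.single j (D.w j) + Finsupp.single r (D.w r)}

lemma adj_w_eq_one {D : WOGraph n} (hsink : ∀ i ∈ D.Vplus, D.IsSink i) {i j : Fin n}
    (h : D.adj i j) : D.w i = 1 := by
  have h1 := D.one_le_w i
  by_contra hne
  have h2 : 2 ≤ D.w i := by omega
  exact hsink i h2 j h

lemma uexp_eq_wexp {D : WOGraph n} (hsink : ∀ i ∈ D.Vplus, D.IsSink i) {i j : Fin n}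
    (h : D.adj i j) : uexp D i j = wexp D i j := by
  rw [uexp, wexp, adj_w_eq_one hsink h]

lemma wexp_comm (D : WOGraph n) (i j : Fin n) : wexp D i j = wexp D j i := add_comm _ _

variable (K : Type*) [Field K]

lemma X_mul_X_pow_eq (i j : Fin n) (k : ℕ) :
    (X i * X j ^ k : MvPoly n K) = monomial (Finsupp.single i 1 + Finsupp.single j k) 1 := by
  rw [X_pow_eq_monomial, X, monomial_mul, one_mul]

lemma X_pow_mul_X_pow_mul_X_pow (i j r : Fin n) (a b c : ℕ) :
    (X i ^ a * X j ^ b * X r ^ c : MvPoly n K)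
      = monomial (Finsupp.single i a + Finsupp.single j b + Finsupp.single r c) 1 := by
  rw [X_pow_eq_monomial, X_pow_eq_monomial, X_pow_eq_monomial, monomial_mul, monomial_mul,
    one_mul, one_mul]

lemma edgeIdeal_eq (D : WOGraph n) : edgeIdeal K D = monIdeal K (Gens1 D) := by
  rw [edgeIdeal, edgeIdealOn, monIdeal]
  congr 1
  ext m
  constructor
  · rintro ⟨i, j, -, -, hadj, rfl⟩
    exact ⟨uexp D i j, ⟨i, j, hadj, rfl⟩, (X_mul_X_pow_eq K i j (D.w j)).symm⟩
  · rintro ⟨e, ⟨i, j, hadj, rfl⟩, rfl⟩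
    exact ⟨i, j, trivial, trivial, hadj, (X_mul_X_pow_eq K i j (D.w j)).symm⟩

lemma edgeIdeal_sq (D : WOGraph n) : (edgeIdeal K D) ^ 2 = monIdeal K (Gens2 D) := by
  rw [pow_two, edgeIdeal_eq, monIdeal, Ideal.span_mul_span, monIdeal]
  congr 1
  ext m
  simp only [Set.mem_iUnion, Set.mem_singleton_iff, Set.mem_image, exists_prop]
  constructor
  · rintro ⟨s, ⟨g1, hg1, rfl⟩, t, ⟨g2, hg2, rfl⟩, rfl⟩
    exact ⟨g1 + g2, ⟨g1, hg1, g2, hg2, rfl⟩, by dsimp only; rw [monomial_mul, one_mul]⟩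
  · rintro ⟨e, ⟨g1, hg1, g2, hg2, rfl⟩, rfl⟩
    exact ⟨monomial g1 1, ⟨g1, hg1, rfl⟩, monomial g2 1, ⟨g2, hg2, rfl⟩,
      by dsimp only; rw [monomial_mul, one_mul]⟩

lemma rhs_eq (D : WOGraph n) :
    (edgeIdeal K D) ^ 2 ⊔
        Ideal.span {m : MvPoly n K | ∃ i j r : Fin n, D.IsTriangle i j r ∧
          m = X i ^ D.w i * X j ^ D.w j * X r ^ D.w r}
      = monIdeal K (Gens2 D ∪ TriExp D) := by
  rw [edgeIdeal_sq, monIdeal, monIdeal, Set.image_union, Ideal.span_union]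
  congr 2
  ext m
  constructor
  · rintro ⟨i, j, r, htri, rfl⟩
    exact ⟨_, ⟨i, j, r, htri, rfl⟩, (X_pow_mul_X_pow_mul_X_pow K i j r _ _ _).symm⟩
  · rintro ⟨e, ⟨i, j, r, htri, rfl⟩, rfl⟩
    exact ⟨i, j, r, htri, (X_pow_mul_X_pow_mul_X_pow K i j r _ _ _).symm⟩

/-! ### Minimal primes of the edge ideal -/

lemma edgeIdeal_le_PC {D : WOGraph n} {C : Set (Fin n)} (hC : Cover D C) :
    edgeIdeal K D ≤ PC K C := by
  rw [edgeIdeal, edgeIdealOn, Ideal.span_le]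
  rintro m ⟨i, j, -, -, hadj, rfl⟩
  rcases hC hadj with h | h
  · exact Ideal.mul_mem_right _ _ ((X_mem_PC_iff K C i).2 h)
  · refine Ideal.mul_mem_left _ _ ?_
    exact Ideal.pow_mem_of_mem _ ((X_mem_PC_iff K C j).2 h) _ (D.one_le_w j)

lemma cover_of_prime {D : WOGraph n} {p : Ideal (MvPoly n K)} (hp : p.IsPrime)
    (hIp : edgeIdeal K D ≤ p) : Cover D {v | (X v : MvPoly n K) ∈ p} := by
  intro i j hadj
  have hmem : (X i * X j ^ D.w j : MvPoly n K) ∈ p := by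
    apply hIp
    rw [edgeIdeal, edgeIdealOn]
    exact Ideal.subset_span ⟨i, j, trivial, trivial, hadj, rfl⟩
  rcases hp.mem_or_mem hmem with h | h
  · exact Or.inl h
  · exact Or.inr (hp.mem_of_pow_mem _ h)

lemma minimalPrimes_eq (D : WOGraph n) {p : Ideal (MvPoly n K)}
    (hp : p ∈ (edgeIdeal K D).minimalPrimes) : ∃ C, MinCover D C ∧ p = PC K C := by
  have hprime : p.IsPrime := hp.1.1
  have hIp : edgeIdeal K D ≤ p := hp.1.2
  obtain ⟨C, hsub, hC⟩ := exists_minCover_subset D (cover_of_prime K hprime hIp)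
  have hPCp : PC K C ≤ p := by
    rw [PC, Ideal.span_le]
    rintro m ⟨v, hv, rfl⟩
    exact hsub hv
  have := hp.2 ⟨PC_isPrime K C, edgeIdeal_le_PC K hC.1⟩ hPCp
  exact ⟨C, hC, le_antisymm this hPCp⟩

lemma minCover_minimalPrime (D : WOGraph n) {C : Set (Fin n)} (hC : MinCover D C) :
    PC K C ∈ (edgeIdeal K D).minimalPrimes := by
  refine ⟨⟨PC_isPrime K C, edgeIdeal_le_PC K hC.1⟩, ?_⟩
  rintro q ⟨hqprime, hIq⟩ hqle
  have hCq : Cover D {v | (X v : MvPoly n K) ∈ q} := cover_of_prime K hqprime hIq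
  have hsub : {v | (X v : MvPoly n K) ∈ q} ⊆ C := fun v hv =>
    (X_mem_PC_iff K C v).1 (hqle hv)
  have hCsub : C ⊆ {v | (X v : MvPoly n K) ∈ q} := by
    intro v hv
    by_contra hnv
    refine hC.2 v hv (hCq.mono ?_)
    intro u hu
    exact ⟨hsub hu, fun he => hnv (he ▸ hu)⟩
  rw [PC, Ideal.span_le]
  rintro m ⟨v, hv, rfl⟩
  exact hCsub hv

end SP16
end
noncomputable section
namespace SP16
open MvPolynomial
open scoped Classical

variable {n : ℕ}

lemma wexp_apply (D : WOGraph n) (i j v : Fin n) :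
    wexp D i j v = (if i = v then D.w i else 0) + (if j = v then D.w j else 0) := by
  rw [wexp, Finsupp.add_apply, Finsupp.single_apply, Finsupp.single_apply]

lemma wexp_apply_ge (D : WOGraph n) {i j v : Fin n} (h : i = v ∨ j = v) :
    D.w v ≤ wexp D i j v := by
  rcases h with h | h
  · subst h
    rw [wexp_apply, if_pos rfl]
    exact Nat.le_add_right _ _
  · subst h
    rw [wexp_apply]
    rw [if_pos rfl]
    exact Nat.le_add_left _ _

lemma wexp_mem_Gens1 {D : WOGraph n} (hsink : ∀ i ∈ D.Vplus, D.IsSink i) {i j : Fin n}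
    (h : D.adj i j ∨ D.adj j i) : wexp D i j ∈ Gens1 D := by
  rcases h with h | h
  · exact ⟨i, j, h, (uexp_eq_wexp hsink h).symm⟩
  · exact ⟨j, i, h, by rw [uexp_eq_wexp hsink h, wexp_comm]⟩

lemma minCover_private_edge {D : WOGraph n} {C : Set (Fin n)} (hC : MinCover D C) {v : Fin n}
    (hv : v ∈ C) : ∃ x, x ∉ C ∧ (D.adj v x ∨ D.adj x v) := by
  have hnc := hC.2 v hv
  rw [Cover] at hnc
  push_neg at hnc
  obtain ⟨i, j, hadj, hi, hj⟩ := hnc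
  rcases hC.1 hadj with hiC | hjC
  · have hiv : i = v := by
      by_contra hne
      exact hi ⟨hiC, hne⟩
    subst hiv
    have hjC' : j ∉ C := by
      intro hjC
      have : j ≠ i := fun h => D.loopless i (h ▸ hadj)
      exact hj ⟨hjC, this⟩
    exact ⟨j, hjC', Or.inl hadj⟩
  · have hjv : j = v := by
      by_contra hne
      exact hj ⟨hjC, hne⟩
    subst hjv
    have hiC' : i ∉ C := by
      intro hiC
      have : i ≠ j := fun h => D.loopless i (h ▸ hadj : D.adj i i)
      exact hi ⟨hiC, this⟩
    exact ⟨i, hiC', Or.inr hadj⟩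

lemma mem_satC_gens2_aux {D : WOGraph n} {C : Set (Fin n)} {b d : Fin n →₀ ℕ}
    {i1 j1 i2 j2 v1 v2 : Fin n}
    (hb : rC C b = 0) (hle : wexp D i1 j1 + wexp D i2 j2 ≤ d + b)
    (hv1C : v1 ∈ C) (h1 : i1 = v1 ∨ j1 = v1) (hv2C : v2 ∈ C) (h2 : i2 = v2 ∨ j2 = v2) :
    (∃ v ∈ C, 2 * D.w v ≤ d v) ∨
      (∃ v ∈ C, ∃ v' ∈ C, v ≠ v' ∧ D.w v ≤ d v ∧ D.w v' ≤ d v') := by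
  have hb1 : b v1 = 0 := (rC_eq_zero_iff C b).1 hb v1 hv1C
  have hb2 : b v2 = 0 := (rC_eq_zero_iff C b).1 hb v2 hv2C
  have hle1 := Finsupp.le_def.1 hle v1
  have hle2 := Finsupp.le_def.1 hle v2
  rw [Finsupp.add_apply, Finsupp.add_apply, hb1, add_zero] at hle1
  rw [Finsupp.add_apply, Finsupp.add_apply, hb2, add_zero] at hle2
  have hge1 := wexp_apply_ge D h1
  have hge2 := wexp_apply_ge D h2
  rcases eq_or_ne v1 v2 with rfl | hne
  · left
    refine ⟨v1, hv1C, ?_⟩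
    have := wexp_apply_ge D h2
    omega
  · right
    exact ⟨v1, hv1C, v2, hv2C, hne, by omega, by omega⟩

/-- Budget characterization of membership in the saturation of `I²` at a minimal cover. -/
lemma mem_satC_gens2_iff {D : WOGraph n} (hsink : ∀ i ∈ D.Vplus, D.IsSink i)
    {C : Set (Fin n)} (hC : MinCover D C) (d : Fin n →₀ ℕ) :
    d ∈ satC C (up (Gens2 D)) ↔
      (∃ v ∈ C, 2 * D.w v ≤ d v) ∨
      (∃ v ∈ C, ∃ v' ∈ C, v ≠ v' ∧ D.w v ≤ d v ∧ D.w v' ≤ d v') := by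
  constructor
  · rintro ⟨b, hb, g, ⟨g1, ⟨i1, j1, hadj1, rfl⟩, g2, ⟨i2, j2, hadj2, rfl⟩, rfl⟩, hle⟩
    rw [uexp_eq_wexp hsink hadj1, uexp_eq_wexp hsink hadj2] at hle
    rcases hC.1 hadj1 with h1 | h1 <;> rcases hC.1 hadj2 with h2 | h2
    · exact mem_satC_gens2_aux hb hle h1 (Or.inl rfl) h2 (Or.inl rfl)
    · exact mem_satC_gens2_aux hb hle h1 (Or.inl rfl) h2 (Or.inr rfl)
    · exact mem_satC_gens2_aux hb hle h1 (Or.inr rfl) h2 (Or.inl rfl)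
    · exact mem_satC_gens2_aux hb hle h1 (Or.inr rfl) h2 (Or.inr rfl)
  · intro h
    rcases h with ⟨v, hvC, hrich⟩ | ⟨v, hvC, v', hv'C, hne, hv, hv'⟩
    · obtain ⟨x, hxC, hedge⟩ := minCover_private_edge hC hvC
      set G : Fin n →₀ ℕ := wexp D v x + wexp D v x with hG
      set b : Fin n →₀ ℕ := G - rC C G with hbdef
      have hbu0 : ∀ u ∈ C, b u = 0 := fun u hu => by
        rw [hbdef, Finsupp.tsub_apply, rC_apply, if_pos hu, Nat.sub_self]
      have hbu1 : ∀ u, u ∉ C → b u = G u := fun u hu => by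
        rw [hbdef, Finsupp.tsub_apply, rC_apply, if_neg hu, Nat.sub_zero]
      have hbC : rC C b = 0 := by
        rw [rC_eq_zero_iff]
        exact hbu0
      refine ⟨b, hbC, G, ⟨_, wexp_mem_Gens1 hsink hedge, _, wexp_mem_Gens1 hsink hedge, rfl⟩, ?_⟩
      rw [Finsupp.le_def]
      intro u
      have hrhs : (d + b) u = d u + b u := Finsupp.add_apply d b u
      rw [hrhs]
      by_cases huC : u ∈ C
      · rw [hbu0 u huC]
        have hxu : x ≠ u := fun h => hxC (h ▸ huC)
        have hGu2 : G u = (wexp D v x) u + (wexp D v x) u := by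
          rw [hG, Finsupp.add_apply]
        rw [hGu2, wexp_apply, if_neg hxu]
        rcases eq_or_ne v u with huv | huv
        · subst huv
          rw [if_pos rfl]
          omega
        · rw [if_neg huv]
          omega
      · rw [hbu1 u huC]
        have hGu : G u = (wexp D v x) u + (wexp D v x) u := by
          rw [hG, Finsupp.add_apply]
        omega
    · obtain ⟨x, hxC, hedge⟩ := minCover_private_edge hC hvC
      obtain ⟨x', hx'C, hedge'⟩ := minCover_private_edge hC hv'C
      set G : Fin n →₀ ℕ := wexp D v x + wexp D v' x' with hG
      set b : Fin n →₀ ℕ := G - rC C G with hbdef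
      have hbu0 : ∀ u ∈ C, b u = 0 := fun u hu => by
        rw [hbdef, Finsupp.tsub_apply, rC_apply, if_pos hu, Nat.sub_self]
      have hbu1 : ∀ u, u ∉ C → b u = G u := fun u hu => by
        rw [hbdef, Finsupp.tsub_apply, rC_apply, if_neg hu, Nat.sub_zero]
      have hbC : rC C b = 0 := by
        rw [rC_eq_zero_iff]
        exact hbu0
      refine ⟨b, hbC, G, ⟨_, wexp_mem_Gens1 hsink hedge, _, wexp_mem_Gens1 hsink hedge', rfl⟩, ?_⟩
      rw [Finsupp.le_def]
      intro u
      have hrhs : (d + b) u = d u + b u := Finsupp.add_apply d b u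
      rw [hrhs]
      by_cases huC : u ∈ C
      · rw [hbu0 u huC]
        have hxu : x ≠ u := fun h => hxC (h ▸ huC)
        have hx'u : x' ≠ u := fun h => hx'C (h ▸ huC)
        have hGu2 : G u = (wexp D v x) u + (wexp D v' x') u := by
          rw [hG, Finsupp.add_apply]
        rw [hGu2, wexp_apply, wexp_apply, if_neg hxu, if_neg hx'u]
        rcases eq_or_ne v u with huv | huv
        · subst huv
          rw [if_pos rfl, if_neg (fun h => hne h.symm)]
          omega
        · rw [if_neg huv]
          rcases eq_or_ne v' u with hu'v | hu'v
          · subst hu'v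
            rw [if_pos rfl]
            omega
          · rw [if_neg hu'v]
            omega
      · rw [hbu1 u huC]
        have hGu : G u = (wexp D v x) u + (wexp D v' x') u := by
          rw [hG, Finsupp.add_apply]
        omega

end SP16
end
noncomputable section
namespace SP16
open MvPolynomial
open scoped Classical

variable {n : ℕ}

lemma four_singles_le {D : WOGraph n} {d : Fin n →₀ ℕ} {i j i' j' : Fin n}
    (h12 : i ≠ j) (h13 : i ≠ i') (h14 : i ≠ j') (h23 : j ≠ i') (h24 : j ≠ j') (h34 : i' ≠ j')
    (hi : D.w i ≤ d i) (hj : D.w j ≤ d j) (hi' : D.w i' ≤ d i') (hj' : D.w j' ≤ d j') :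
    wexp D i j + wexp D i' j' ≤ d := by
  rw [Finsupp.le_def]
  intro v
  have h : (wexp D i j + wexp D i' j') v = wexp D i j v + wexp D i' j' v :=
    Finsupp.add_apply _ _ _
  rw [h, wexp_apply, wexp_apply]
  split_ifs <;> subst_vars <;> first | omega | simp_all

lemma centered_pair_le {D : WOGraph n} {d : Fin n →₀ ℕ} {c x y : Fin n}
    (hcx : c ≠ x) (hcy : c ≠ y) (hxy : x ≠ y)
    (hc : 2 * D.w c ≤ d c) (hx : D.w x ≤ d x) (hy : D.w y ≤ d y) :
    wexp D c x + wexp D c y ≤ d := by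
  rw [Finsupp.le_def]
  intro v
  have h : (wexp D c x + wexp D c y) v = wexp D c x v + wexp D c y v :=
    Finsupp.add_apply _ _ _
  rw [h, wexp_apply, wexp_apply]
  split_ifs <;> subst_vars <;> first | omega | simp_all

lemma doubled_edge_le {D : WOGraph n} {d : Fin n →₀ ℕ} {a b : Fin n}
    (hab : a ≠ b) (ha : 2 * D.w a ≤ d a) (hb : 2 * D.w b ≤ d b) :
    wexp D a b + wexp D a b ≤ d := by
  rw [Finsupp.le_def]
  intro v
  have h : (wexp D a b + wexp D a b) v = wexp D a b v + wexp D a b v :=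
    Finsupp.add_apply _ _ _
  rw [h, wexp_apply]
  split_ifs <;> subst_vars <;> first | omega | simp_all

lemma tri_singles_le {D : WOGraph n} {d : Fin n →₀ ℕ} {i j r : Fin n}
    (hij : i ≠ j) (hjr : j ≠ r) (hir : i ≠ r)
    (hi : D.w i ≤ d i) (hj : D.w j ≤ d j) (hr : D.w r ≤ d r) :
    Finsupp.single i (D.w i) + Finsupp.single j (D.w j) + Finsupp.single r (D.w r) ≤ d := by
  rw [Finsupp.le_def]
  intro v
  have h : (Finsupp.single i (D.w i) + Finsupp.single j (D.w j)
      + Finsupp.single r (D.w r)) v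
      = Finsupp.single i (D.w i) v + Finsupp.single j (D.w j) v
        + Finsupp.single r (D.w r) v := by
    rw [Finsupp.add_apply, Finsupp.add_apply]
  rw [h, Finsupp.single_apply, Finsupp.single_apply, Finsupp.single_apply]
  split_ifs <;> subst_vars <;> first | omega | simp_all

/-- The combinatorial heart: if `d` passes the budget test for every minimal cover then the
corresponding monomial lies in `I² + (triangles)`. -/
lemma combinatorial_main {D : WOGraph n} (hsink : ∀ i ∈ D.Vplus, D.IsSink i) (d : Fin n →₀ ℕ)
    (H : ∀ C : Set (Fin n), MinCover D C →
      (∃ v ∈ C, 2 * D.w v ≤ d v) ∨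
      (∃ v ∈ C, ∃ v' ∈ C, v ≠ v' ∧ D.w v ≤ d v ∧ D.w v' ≤ d v')) :
    d ∈ up (Gens2 D ∪ TriExp D) := by
  by_contra hgoal
  set U : Set (Fin n) := {v | D.w v ≤ d v} with hUdef
  have hmemU : ∀ {v : Fin n}, v ∈ U → D.w v ≤ d v := fun hv => hv
  have hnopair : ∀ i j i' j' : Fin n, D.underlying.Adj i j → D.underlying.Adj i' j' →
      ¬ (wexp D i j + wexp D i' j' ≤ d) := by
    intro i j i' j' hij hij' hle
    exact hgoal ⟨wexp D i j + wexp D i' j',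
      Or.inl ⟨_, wexp_mem_Gens1 hsink hij, _, wexp_mem_Gens1 hsink hij', rfl⟩, hle⟩
  have hnotri : ∀ i j r : Fin n, D.IsTriangle i j r →
      i ∈ U → j ∈ U → r ∈ U → False := by
    intro i j r htri hi hj hr
    exact hgoal ⟨_, Or.inr ⟨i, j, r, htri, rfl⟩,
      tri_singles_le htri.1.ne htri.2.1.ne htri.2.2.ne (hmemU hi) (hmemU hj) (hmemU hr)⟩
  have hn1 : ∀ a b a' b' : Fin n, D.underlying.Adj a b → D.underlying.Adj a' b' →
      a ≠ a' → a ≠ b' → b ≠ a' → b ≠ b' →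
      a ∈ U → b ∈ U → a' ∈ U → b' ∈ U → False := by
    intro a b a' b' hab ha'b' h13 h14 h23 h24 ha hb ha' hb'
    exact hnopair _ _ _ _ hab ha'b'
      (four_singles_le hab.ne h13 h14 h23 h24 ha'b'.ne (hmemU ha) (hmemU hb) (hmemU ha') (hmemU hb'))
  have hn4 : ∀ c x y : Fin n, D.underlying.Adj c x → D.underlying.Adj c y → x ≠ y →
      x ∈ U → y ∈ U → 2 * D.w c ≤ d c → False := by
    intro c x y hcx hcy hxy hx hy hc
    exact hnopair _ _ _ _ hcx hcy
      (centered_pair_le hcx.ne hcy.ne hxy hc (hmemU hx) (hmemU hy))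
  have hn3 : ∀ a b : Fin n, D.underlying.Adj a b →
      2 * D.w a ≤ d a → 2 * D.w b ≤ d b → False := by
    intro a b hab ha hb
    exact hnopair _ _ _ _ hab hab (doubled_edge_le hab.ne ha hb)
  by_cases hF : ∃ a b, a ∈ U ∧ b ∈ U ∧ D.underlying.Adj a b
  · obtain ⟨a0, b0, ha0, hb0, hab0⟩ := hF
    have hcenter : ∃ c ℓ, c ∈ U ∧ ℓ ∈ U ∧ D.underlying.Adj c ℓ ∧ ¬ (2 * D.w c ≤ d c) ∧
        (∀ u u', u ∈ U → u' ∈ U → D.underlying.Adj u u' → u = c ∨ u' = c) := by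
      by_cases hall : ∀ u u', u ∈ U → u' ∈ U → D.underlying.Adj u u' → u = a0 ∨ u' = a0
      · by_cases hrich0 : 2 * D.w a0 ≤ d a0
        · have huniq : ∀ u u', u ∈ U → u' ∈ U → D.underlying.Adj u u' →
              (u = a0 ∧ u' = b0) ∨ (u' = a0 ∧ u = b0) := by
            intro u u' hu hu' hadj
            rcases hall u u' hu hu' hadj with h | h
            · subst h
              left
              refine ⟨rfl, ?_⟩
              by_contra hne'
              exact hn4 u u' b0 hadj hab0 hne' hu' hb0 hrich0
            · subst h
              right
              refine ⟨rfl, ?_⟩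
              by_contra hne'
              exact hn4 u' u b0 hadj.symm hab0 hne' hu hb0 hrich0
          have hb0poor : ¬ (2 * D.w b0 ≤ d b0) := fun h => hn3 a0 b0 hab0 hrich0 h
          refine ⟨b0, a0, hb0, ha0, hab0.symm, hb0poor, ?_⟩
          intro u u' hu hu' hadj
          rcases huniq u u' hu hu' hadj with ⟨_, h⟩ | ⟨_, h⟩
          · right; exact h
          · left; exact h
        · exact ⟨a0, b0, ha0, hb0, hab0, hrich0, hall⟩
      · push_neg at hall
        obtain ⟨a1, b1, ha1, hb1, hadj1, hna1, hnb1⟩ := hall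
        have hzex : ∃ z, z ∈ U ∧ D.underlying.Adj b0 z ∧ z ≠ a0 := by
          rcases eq_or_ne b0 a1 with h | h1
          · subst h
            exact ⟨b1, hb1, hadj1, hnb1⟩
          · rcases eq_or_ne b0 b1 with h | h2
            · subst h
              exact ⟨a1, ha1, hadj1.symm, hna1⟩
            · exact (hn1 a0 b0 a1 b1 hab0 hadj1
                (Ne.symm hna1) (Ne.symm hnb1) h1 h2 ha0 hb0 ha1 hb1).elim
        obtain ⟨z, hzU, hb0z, hza0⟩ := hzex
        have hb0poor : ¬ (2 * D.w b0 ≤ d b0) :=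
          fun h => hn4 b0 a0 z hab0.symm hb0z (Ne.symm hza0) ha0 hzU h
        refine ⟨b0, a0, hb0, ha0, hab0.symm, hb0poor, ?_⟩
        intro u u' hu hu' hadj
        by_contra hcon
        push_neg at hcon
        obtain ⟨hub0, hu'b0⟩ := hcon
        have ha0mem : u = a0 ∨ u' = a0 := by
          by_contra hcc
          push_neg at hcc
          exact hn1 a0 b0 u u' hab0 hadj (Ne.symm hcc.1) (Ne.symm hcc.2)
            (Ne.symm hub0) (Ne.symm hu'b0) ha0 hb0 hu hu'
        obtain ⟨t, htU, ha0t, htb0⟩ : ∃ t, t ∈ U ∧ D.underlying.Adj a0 t ∧ t ≠ b0 := by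
          rcases ha0mem with h | h
          · subst h
            exact ⟨u', hu', hadj, hu'b0⟩
          · subst h
            exact ⟨u, hu, hadj.symm, hub0⟩
        have htz : t = z := by
          by_contra htz
          exact hn1 a0 t b0 z ha0t hb0z hab0.ne (Ne.symm hza0) htb0 htz ha0 htU hb0 hzU
        subst htz
        exact hnotri a0 b0 t ⟨hab0, hb0z, ha0t⟩ ha0 hb0 htU
    obtain ⟨c, ℓ, hcU, hℓU, hcℓ, hcpoor, hcen⟩ := hcenter
    have hind : Indep D (U \ {c}) := by
      rintro u ⟨huU, huc⟩ u' ⟨hu'U, hu'c⟩ hadj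
      rcases hcen u u' huU hu'U hadj with h | h
      · exact huc h
      · exact hu'c h
    obtain ⟨A, hUA, hA⟩ := exists_maxIndep_superset D hind
    have hcA : c ∉ A := by
      intro hcA
      have hℓA : ℓ ∈ A := hUA ⟨hℓU, fun h => hcℓ.ne h.symm⟩
      exact hA.1 hcA hℓA hcℓ
    have hC := maxIndep_compl_minCover hA
    rcases H _ hC with ⟨v, hvC, hrich⟩ | ⟨v, hvC, v', hv'C, hne, hv, hv'⟩
    · have hvU : v ∈ U := by
        have : D.w v ≤ d v := by omega
        exact this
      have hvc : v = c := by
        by_contra hvc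
        exact hvC (hUA ⟨hvU, hvc⟩)
      subst hvc
      exact hcpoor hrich
    · have h1 : v = c := by
        by_contra h
        exact hvC (hUA ⟨hv, h⟩)
      have h2 : v' = c := by
        by_contra h
        exact hv'C (hUA ⟨hv', h⟩)
      exact hne (h1.trans h2.symm)
  · have hind : Indep D U := fun a ha b hb hadj => hF ⟨a, b, ha, hb, hadj⟩
    obtain ⟨A, hUA, hA⟩ := exists_maxIndep_superset D hind
    have hC := maxIndep_compl_minCover hA
    rcases H _ hC with ⟨v, hvC, hrich⟩ | ⟨v, hvC, v', hv'C, hne, hv, hv'⟩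
    · have hvU : v ∈ U := by
        have : D.w v ≤ d v := by omega
        exact this
      exact hvC (hUA hvU)
    · exact hvC (hUA hv)

end SP16
end
noncomputable section
namespace SP16
open MvPolynomial
open scoped Classical

variable {n : ℕ} (K : Type*) [Field K]

lemma monIdeal_up (Gs : Set (Fin n →₀ ℕ)) : monIdeal K (up Gs) = monIdeal K Gs := by
  apply le_antisymm
  · rw [monIdeal, Ideal.span_le]
    rintro m ⟨e, ⟨g, hg, hge⟩, rfl⟩
    show (monomial e 1 : MvPoly n K) ∈ monIdeal K Gs
    have h : (monomial e 1 : MvPoly n K) = monomial (e - g) 1 * monomial g 1 := by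
      rw [monomial_mul, one_mul, tsub_add_cancel_of_le hge]
    rw [h]
    exact Ideal.mul_mem_left _ _ (Ideal.subset_span ⟨g, hg, rfl⟩)
  · exact monIdeal_mono K (subset_up Gs)

lemma mem_comap_iff_exists (P : Ideal (MvPoly n K)) [P.IsPrime] (J : Ideal (MvPoly n K))
    (f : MvPoly n K) :
    f ∈ Ideal.comap (algebraMap (MvPoly n K) (Localization.AtPrime P))
        (Ideal.map (algebraMap (MvPoly n K) (Localization.AtPrime P)) J) ↔
      ∃ s, s ∉ P ∧ s * f ∈ J := by
  rw [Ideal.mem_comap, ← IsLocalization.mk'_one (M := P.primeCompl) (Localization.AtPrime P) f,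
    IsLocalization.mk'_mem_map_algebraMap_iff P.primeCompl]
  constructor
  · rintro ⟨s, hs, hsf⟩
    exact ⟨s, hs, hsf⟩
  · rintro ⟨s, hs, hsf⟩
    exact ⟨s, hs, hsf⟩

end SP16
end

/-- If `V⁺` are sinks, then
`I^{(2)} = I^2 + (x_i^{w_i} x_j^{w_j} x_r^{w_r} : {x_i,x_j,x_r} a triangle of G)`. -/
theorem stmt16 {n : ℕ} (K : Type*) [Field K] (D : WOGraph n)
    (hsink : ∀ i ∈ D.Vplus, D.IsSink i) :
    symbolicPower (edgeIdeal K D) 2 =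
      (edgeIdeal K D) ^ 2 ⊔
        Ideal.span {m : MvPoly n K | ∃ i j r : Fin n, D.IsTriangle i j r ∧
          m = X i ^ D.w i * X j ^ D.w j * X r ^ D.w r} := by
  classical
  rw [SP16.rhs_eq]
  unfold symbolicPower
  apply le_antisymm
  · -- hard inclusion
    intro f hf
    rw [← SP16.monIdeal_up K (SP16.Gens2 D ∪ SP16.TriExp D),
      SP16.mem_monIdeal K (SP16.up_Up _)]
    intro e he
    apply SP16.combinatorial_main hsink
    intro C hC
    rw [← SP16.mem_satC_gens2_iff hsink hC]
    haveI : (SP16.PC K C).IsPrime := SP16.PC_isPrime K C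
    have hP := SP16.minCover_minimalPrime K D hC
    have hf1 := Ideal.mem_iInf.1 (Ideal.mem_iInf.1 hf (SP16.PC K C)) hP
    obtain ⟨s, hs, hsf⟩ := (SP16.mem_comap_iff_exists K (SP16.PC K C) _ f).1 hf1
    rw [SP16.edgeIdeal_sq, ← SP16.monIdeal_up] at hsf
    have hsf2 : s * f ∈ SP16.monIdeal K (SP16.satC C (SP16.up (SP16.Gens2 D))) :=
      SP16.monIdeal_mono K (SP16.subset_satC _ _) hsf
    have hfsat := SP16.mem_monIdeal_of_mul_mem K (SP16.satC_Up C (SP16.up_Up _))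
      (SP16.satC_sat C _) f.support.card s f le_rfl hs hsf2
    exact (SP16.mem_monIdeal K (SP16.satC_Up C (SP16.up_Up _))).1 hfsat e he
  · -- easy inclusion
    refine le_iInf fun P => le_iInf fun hP => ?_
    obtain ⟨C, hC, hPC⟩ := SP16.minimalPrimes_eq K D hP
    subst hPC
    haveI : (SP16.PC K C).IsPrime := SP16.PC_isPrime K C
    intro f hf
    rw [← SP16.monIdeal_up K (SP16.Gens2 D ∪ SP16.TriExp D),
      SP16.mem_monIdeal K (SP16.up_Up _)] at hf
    have hsum : f = ∑ e ∈ f.support, monomial e (coeff e f) :=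
      (support_sum_monomial_coeff f).symm
    rw [hsum]
    apply Ideal.sum_mem
    intro e he
    -- each exponent e lies in the saturation of Gens2 at C
    have hesat : e ∈ SP16.satC C (SP16.up (SP16.Gens2 D)) := by
      obtain ⟨g, hg, hge⟩ := hf e he
      rcases hg with hg | hg
      · exact SP16.subset_satC _ _ ⟨g, hg, hge⟩
      · obtain ⟨i, j, r, htri, rfl⟩ := hg
        have hij : i ≠ j := htri.1.ne
        have hjr : j ≠ r := htri.2.1.ne
        have hir : i ≠ r := htri.2.2.ne
        set τ : Fin n →₀ ℕ := Finsupp.single i (D.w i) + Finsupp.single j (D.w j)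
          + Finsupp.single r (D.w r) with hτ
        have hti : D.w i ≤ τ i := by
          rw [hτ, Finsupp.add_apply, Finsupp.add_apply, Finsupp.single_eq_same,
            Finsupp.single_eq_of_ne hij, Finsupp.single_eq_of_ne hir]
          omega
        have htj : D.w j ≤ τ j := by
          rw [hτ, Finsupp.add_apply, Finsupp.add_apply, Finsupp.single_eq_same,
            Finsupp.single_eq_of_ne (Ne.symm hij), Finsupp.single_eq_of_ne hjr]
          omega
        have htr : D.w r ≤ τ r := by
          rw [hτ, Finsupp.add_apply, Finsupp.add_apply, Finsupp.single_eq_same,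
            Finsupp.single_eq_of_ne (Ne.symm hir), Finsupp.single_eq_of_ne (Ne.symm hjr)]
          omega
        have hCij : i ∈ C ∨ j ∈ C := by
          rcases htri.1 with h | h
          · exact hC.1 h
          · exact (hC.1 h).symm
        have hCjr : j ∈ C ∨ r ∈ C := by
          rcases htri.2.1 with h | h
          · exact hC.1 h
          · exact (hC.1 h).symm
        have hCir : i ∈ C ∨ r ∈ C := by
          rcases htri.2.2 with h | h
          · exact hC.1 h
          · exact (hC.1 h).symm
        have hbud : (∃ v ∈ C, 2 * D.w v ≤ τ v) ∨
            (∃ v ∈ C, ∃ v' ∈ C, v ≠ v' ∧ D.w v ≤ τ v ∧ D.w v' ≤ τ v') := by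
          right
          rcases hCij with hi | hj
          · rcases hCjr with hj | hr
            · exact ⟨i, hi, j, hj, hij, hti, htj⟩
            · exact ⟨i, hi, r, hr, hir, hti, htr⟩
          · rcases hCir with hi | hr
            · exact ⟨i, hi, j, hj, hij, hti, htj⟩
            · exact ⟨j, hj, r, hr, hjr, htj, htr⟩
        have hτsat : τ ∈ SP16.satC C (SP16.up (SP16.Gens2 D)) :=
          (SP16.mem_satC_gens2_iff hsink hC τ).2 hbud
        exact SP16.satC_Up C (SP16.up_Up _) hτsat hge
    obtain ⟨b, hb, hdb⟩ := hesat
    refine (SP16.mem_comap_iff_exists K (SP16.PC K C) _ _).2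
      ⟨monomial b 1, SP16.monomial_not_mem_PC K C hb, ?_⟩
    rw [SP16.edgeIdeal_sq, ← SP16.monIdeal_up]
    have hmul : (monomial b 1 : MvPoly n K) * monomial e (coeff e f)
        = monomial (e + b) (coeff e f) := by
      rw [monomial_mul, one_mul, add_comm]
    rw [hmul]
    exact SP16.monomial_mem_monIdeal K hdb _
end

section
/- Let D be a weighted oriented graph such that every vertex of V^+ is a sink, let I = I(D), and let T be the principal ideal generated by x_i^{w(x_i)} x_j^{w(x_j)} x_r^{w(x_r)} for a triangle {x_i, x_j, x_r} of the underlying graph G. Then (I^2 : T) = I(D∖N[supp T]) + (x^{w(x)} : x ∈ N[supp T]), where supp T = {x_i, x_j, x_r}. -/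
open scoped BigOperators
open MvPolynomial

namespace S18

open Finsupp

variable {n : ℕ}

/-- exponent vector of the edge generator `x_a x_b^{w b}` -/
noncomputable def eexp (D : WOGraph n) (a b : Fin n) : Fin n →₀ ℕ :=
  Finsupp.single a 1 + Finsupp.single b (D.w b)

/-- exponent vector of the triangle monomial -/
noncomputable def triExp (D : WOGraph n) (i j r : Fin n) : Fin n →₀ ℕ :=
  Finsupp.single i (D.w i) + Finsupp.single j (D.w j) + Finsupp.single r (D.w r)

lemma tri_forces {α : Type*} {i j r a1 b1 a2 b2 : α}
    (hA1 : a1 = i ∨ a1 = j ∨ a1 = r) (hB1 : b1 = i ∨ b1 = j ∨ b1 = r)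
    (hA2 : a2 = i ∨ a2 = j ∨ a2 = r) (hB2 : b2 = i ∨ b2 = j ∨ b2 = r)
    (hne1 : a1 ≠ b1) (hne2 : a2 ≠ b2)
    (h1 : a1 ≠ a2) (h2 : a1 ≠ b2) (h3 : a2 ≠ b1) : b2 = b1 := by
  rcases hA1 with rfl | rfl | rfl <;> rcases hB1 with rfl | rfl | rfl <;>
    rcases hA2 with rfl | rfl | rfl <;> rcases hB2 with rfl | rfl | rfl <;> simp_all

lemma tail_w (D : WOGraph n) (hsink : ∀ x ∈ D.Vplus, D.IsSink x) {a b : Fin n}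
    (h : D.adj a b) : D.w a = 1 := by
  by_contra hne
  have h2 : 2 ≤ D.w a := by have := D.one_le_w a; omega
  exact hsink a h2 b h

lemma bwd (D : WOGraph n) (i j r : Fin n) (htri : D.IsTriangle i j r)
    (γ : Fin n →₀ ℕ)
    (hγ : (∃ a b, D.adj a b ∧ γ = eexp D a b) ∨
          (∃ x ∈ D.nbhd {i, j, r}, γ = Finsupp.single x (D.w x))) :
    ∃ a1 b1, D.adj a1 b1 ∧ ∃ a2 b2, D.adj a2 b2 ∧
      eexp D a1 b1 + eexp D a2 b2 ≤ γ + triExp D i j r := by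
  have hwi := D.one_le_w i; have hwj := D.one_le_w j; have hwr := D.one_le_w r
  have hij : D.adj i j ∨ D.adj j i := htri.1
  have hjr : D.adj j r ∨ D.adj r j := htri.2.1
  have hir : D.adj i r ∨ D.adj r i := htri.2.2
  rcases hγ with ⟨a, b, hab, rfl⟩ | ⟨x, hx, rfl⟩
  · have hwa := D.one_le_w a; have hwb := D.one_le_w b
    rcases hij with h | h
    · (refine ⟨a, b, hab, i, j, h, ?_⟩; refine Finsupp.le_def.mpr fun v => ?_; simp only [eexp, triExp, Finsupp.add_apply, Finsupp.single_apply]; split_ifs <;> omega)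
    · (refine ⟨a, b, hab, j, i, h, ?_⟩; refine Finsupp.le_def.mpr fun v => ?_; simp only [eexp, triExp, Finsupp.add_apply, Finsupp.single_apply]; split_ifs <;> omega)
  · have hwx := D.one_le_w x
    simp only [WOGraph.nbhd, Set.mem_union, Set.mem_setOf_eq, Set.mem_insert_iff,
      Set.mem_singleton_iff] at hx
    rcases hx with (rfl | rfl | rfl) | ⟨s, hs, hsx⟩
    · rcases hij with h1 | h1 <;> rcases hir with h2 | h2 <;>
        (refine ⟨_, _, h1, _, _, h2, ?_⟩; refine Finsupp.le_def.mpr fun v => ?_; simp only [eexp, triExp, Finsupp.add_apply, Finsupp.single_apply]; split_ifs <;> omega)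
    · rcases hij with h1 | h1 <;> rcases hjr with h2 | h2 <;>
        (refine ⟨_, _, h1, _, _, h2, ?_⟩; refine Finsupp.le_def.mpr fun v => ?_; simp only [eexp, triExp, Finsupp.add_apply, Finsupp.single_apply]; split_ifs <;> omega)
    · rcases hjr with h1 | h1 <;> rcases hir with h2 | h2 <;>
        (refine ⟨_, _, h1, _, _, h2, ?_⟩; refine Finsupp.le_def.mpr fun v => ?_; simp only [eexp, triExp, Finsupp.add_apply, Finsupp.single_apply]; split_ifs <;> omega)
    · have hsx' : D.adj s x ∨ D.adj x s := hsx
      rcases hs with rfl | rfl | rfl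
      · rcases hsx' with h1 | h1 <;> rcases hjr with h2 | h2 <;>
          (refine ⟨_, _, h1, _, _, h2, ?_⟩; refine Finsupp.le_def.mpr fun v => ?_; simp only [eexp, triExp, Finsupp.add_apply, Finsupp.single_apply]; split_ifs <;> omega)
      · rcases hsx' with h1 | h1 <;> rcases hir with h2 | h2 <;>
          (refine ⟨_, _, h1, _, _, h2, ?_⟩; refine Finsupp.le_def.mpr fun v => ?_; simp only [eexp, triExp, Finsupp.add_apply, Finsupp.single_apply]; split_ifs <;> omega)
      · rcases hsx' with h1 | h1 <;> rcases hij with h2 | h2 <;>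
          (refine ⟨_, _, h1, _, _, h2, ?_⟩; refine Finsupp.le_def.mpr fun v => ?_; simp only [eexp, triExp, Finsupp.add_apply, Finsupp.single_apply]; split_ifs <;> omega)

lemma fwd (D : WOGraph n) (hsink : ∀ x ∈ D.Vplus, D.IsSink x)
    (i j r : Fin n) (htri : D.IsTriangle i j r)
    (e : Fin n →₀ ℕ) (a1 b1 a2 b2 : Fin n) (h1 : D.adj a1 b1) (h2 : D.adj a2 b2)
    (hle : eexp D a1 b1 + eexp D a2 b2 ≤ e + triExp D i j r) :
    (∃ a b, a ∈ (D.nbhd {i, j, r})ᶜ ∧ b ∈ (D.nbhd {i, j, r})ᶜ ∧ D.adj a b ∧ eexp D a b ≤ e) ∨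
    (∃ x ∈ D.nbhd {i, j, r}, Finsupp.single x (D.w x) ≤ e) := by
  classical
  have hij : i ≠ j := htri.1.ne
  have hjr : j ≠ r := htri.2.1.ne
  have hir : i ≠ r := htri.2.2.ne
  have hlev : ∀ v, eexp D a1 b1 v + eexp D a2 b2 v ≤ e v + triExp D i j r v := fun v => by
    simpa [Finsupp.add_apply] using Finsupp.le_def.mp hle v
  have heA : ∀ a b : Fin n, a ≠ b → eexp D a b a = 1 := fun a b h => by
    simp [eexp, Finsupp.add_apply, Finsupp.single_apply, Ne.symm h]
  have heB : ∀ a b : Fin n, a ≠ b → eexp D a b b = D.w b := fun a b h => by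
    simp [eexp, Finsupp.add_apply, Finsupp.single_apply, h]
  have heO : ∀ a b v : Fin n, a ≠ v → b ≠ v → eexp D a b v = 0 := fun a b v hA hB => by
    simp [eexp, Finsupp.add_apply, Finsupp.single_apply, hA, hB]
  have heGe : ∀ a b : Fin n, 1 ≤ eexp D a b a := fun a b => by
    rw [eexp, Finsupp.add_apply, Finsupp.single_eq_same]
    exact Nat.le_add_right 1 _
  have htO : ∀ v : Fin n, v ≠ i → v ≠ j → v ≠ r → triExp D i j r v = 0 := fun v hA hB hC => by
    simp [triExp, Finsupp.add_apply, Finsupp.single_apply, Ne.symm hA, Ne.symm hB, Ne.symm hC]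
  have htS : ∀ x, x ∈ ({i, j, r} : Set (Fin n)) → triExp D i j r x = D.w x := by
    intro x hx
    simp only [Set.mem_insert_iff, Set.mem_singleton_iff] at hx
    rcases hx with rfl | rfl | rfl
    · simp [triExp, Finsupp.add_apply, Finsupp.single_apply, Ne.symm hij, Ne.symm hir]
    · simp [triExp, Finsupp.add_apply, Finsupp.single_apply, hij, Ne.symm hjr]
    · simp [triExp, Finsupp.add_apply, Finsupp.single_apply, hir, hjr]
  have hSN : ∀ x, x ∈ ({i, j, r} : Set (Fin n)) → x ∈ D.nbhd {i, j, r} := fun x hx =>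
    Set.mem_union_left _ hx
  have hAdjN : ∀ s x : Fin n, s ∈ ({i, j, r} : Set (Fin n)) → (D.adj s x ∨ D.adj x s) →
      x ∈ D.nbhd {i, j, r} := fun s x hs h => Set.mem_union_right _ ⟨s, hs, h⟩
  by_cases hm1 : a1 ∈ D.nbhd {i, j, r} ∨ b1 ∈ D.nbhd {i, j, r}
  swap
  · push_neg at hm1
    left
    refine ⟨a1, b1, hm1.1, hm1.2, h1, Finsupp.le_def.mpr fun v => ?_⟩
    have h := hlev v
    by_cases hva : a1 = v
    · subst hva
      have ht : triExp D i j r a1 = 0 := by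
        refine htO a1 ?_ ?_ ?_ <;>
          exact fun hh => hm1.1 (by rw [hh]; exact hSN _ (by simp))
      rw [ht] at h
      omega
    · by_cases hvb : b1 = v
      · subst hvb
        have ht : triExp D i j r b1 = 0 := by
          refine htO b1 ?_ ?_ ?_ <;>
            exact fun hh => hm1.2 (by rw [hh]; exact hSN _ (by simp))
        rw [ht] at h
        omega
      · rw [heO a1 b1 v hva hvb]
        exact Nat.zero_le _
  by_cases hm2 : a2 ∈ D.nbhd {i, j, r} ∨ b2 ∈ D.nbhd {i, j, r}
  swap
  · push_neg at hm2
    left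
    refine ⟨a2, b2, hm2.1, hm2.2, h2, Finsupp.le_def.mpr fun v => ?_⟩
    have h := hlev v
    by_cases hva : a2 = v
    · subst hva
      have ht : triExp D i j r a2 = 0 := by
        refine htO a2 ?_ ?_ ?_ <;>
          exact fun hh => hm2.1 (by rw [hh]; exact hSN _ (by simp))
      rw [ht] at h
      omega
    · by_cases hvb : b2 = v
      · subst hvb
        have ht : triExp D i j r b2 = 0 := by
          refine htO b2 ?_ ?_ ?_ <;>
            exact fun hh => hm2.2 (by rw [hh]; exact hSN _ (by simp))
        rw [ht] at h
        omega
      · rw [heO a2 b2 v hva hvb]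
        exact Nat.zero_le _
  -- both edges meet N[S]
  have hbd1 : ∀ v, eexp D a1 b1 v ≤ e v + triExp D i j r v := fun v =>
    le_trans (Nat.le_add_right _ _) (hlev v)
  have hbd2 : ∀ v, eexp D a2 b2 v ≤ e v + triExp D i j r v := fun v =>
    le_trans (Nat.le_add_left _ _) (hlev v)
  have ecase : ∀ a b : Fin n, D.adj a b →
      (∀ v, eexp D a b v ≤ e v + triExp D i j r v) →
      (a ∈ D.nbhd {i, j, r} ∨ b ∈ D.nbhd {i, j, r}) →
      (∃ x ∈ D.nbhd {i, j, r}, D.w x ≤ e x) ∨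
        (a ∈ ({i, j, r} : Set (Fin n)) ∧ b ∈ ({i, j, r} : Set (Fin n))) := by
    intro a b hab hbd hm
    have hne : a ≠ b := by rintro rfl; exact D.loopless _ hab
    have hwa : D.w a = 1 := tail_w D hsink hab
    by_cases hbS : b ∈ ({i, j, r} : Set (Fin n))
    · by_cases haS : a ∈ ({i, j, r} : Set (Fin n))
      · exact Or.inr ⟨haS, hbS⟩
      · have haN : a ∈ D.nbhd {i, j, r} := hAdjN b a hbS (Or.inr hab)
        refine Or.inl ⟨a, haN, ?_⟩
        have h := hbd a
        have ht : triExp D i j r a = 0 := by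
          refine htO a ?_ ?_ ?_ <;> exact fun hh => haS (by rw [hh]; simp)
        rw [heA a b hne, ht] at h
        omega
    · by_cases hbN : b ∈ D.nbhd {i, j, r}
      · refine Or.inl ⟨b, hbN, ?_⟩
        have h := hbd b
        have ht : triExp D i j r b = 0 := by
          refine htO b ?_ ?_ ?_ <;> exact fun hh => hbS (by rw [hh]; simp)
        rw [heB a b hne, ht] at h
        omega
      · have haN : a ∈ D.nbhd {i, j, r} := hm.resolve_right hbN
        have haS : a ∉ ({i, j, r} : Set (Fin n)) := fun hh => hbN (hAdjN a b hh (Or.inl hab))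
        refine Or.inl ⟨a, haN, ?_⟩
        have h := hbd a
        have ht : triExp D i j r a = 0 := by
          refine htO a ?_ ?_ ?_ <;> exact fun hh => haS (by rw [hh]; simp)
        rw [heA a b hne, ht] at h
        omega
  rcases ecase a1 b1 h1 hbd1 hm1 with ⟨x, hxN, hxe⟩ | ⟨hA1, hB1⟩
  · exact Or.inr ⟨x, hxN, Finsupp.single_le_iff.mpr hxe⟩
  rcases ecase a2 b2 h2 hbd2 hm2 with ⟨x, hxN, hxe⟩ | ⟨hA2, hB2⟩
  · exact Or.inr ⟨x, hxN, Finsupp.single_le_iff.mpr hxe⟩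
  -- both edges lie inside the triangle
  right
  have hne1 : a1 ≠ b1 := by rintro rfl; exact D.loopless _ h1
  have hne2 : a2 ≠ b2 := by rintro rfl; exact D.loopless _ h2
  have hwa1 : D.w a1 = 1 := tail_w D hsink h1
  have hwa2 : D.w a2 = 1 := tail_w D hsink h2
  by_cases hc : a1 = a2 ∨ a1 = b2
  · refine ⟨a1, hSN a1 hA1, Finsupp.single_le_iff.mpr ?_⟩
    have h := hlev a1
    have ht : triExp D i j r a1 = D.w a1 := htS a1 hA1
    have v1 : eexp D a1 b1 a1 = 1 := heA _ _ hne1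
    have v2 : 1 ≤ eexp D a2 b2 a1 := by
      rcases hc with hh | hh
      · rw [hh]; exact heGe a2 b2
      · rw [hh, heB a2 b2 hne2]; exact D.one_le_w b2
    rw [ht, v1] at h
    omega
  by_cases hc2 : a2 = a1 ∨ a2 = b1
  · refine ⟨a2, hSN a2 hA2, Finsupp.single_le_iff.mpr ?_⟩
    have h := hlev a2
    have ht : triExp D i j r a2 = D.w a2 := htS a2 hA2
    have v1 : eexp D a2 b2 a2 = 1 := heA _ _ hne2
    have v2 : 1 ≤ eexp D a1 b1 a2 := by
      rcases hc2 with hh | hh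
      · rw [hh]; exact heGe a1 b1
      · rw [hh, heB a1 b1 hne1]; exact D.one_le_w b1
    rw [ht, v1] at h
    omega
  · push_neg at hc hc2
    have hbb : b2 = b1 := by
      simp only [Set.mem_insert_iff, Set.mem_singleton_iff] at hA1 hB1 hA2 hB2
      exact tri_forces hA1 hB1 hA2 hB2 hne1 hne2 hc.1 hc.2 hc2.2
    refine ⟨b1, hSN b1 hB1, Finsupp.single_le_iff.mpr ?_⟩
    have h := hlev b1
    have ht : triExp D i j r b1 = D.w b1 := htS b1 hB1
    have v1 : eexp D a1 b1 b1 = D.w b1 := heB _ _ hne1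
    have v2 : eexp D a2 b2 b1 = D.w b1 := by rw [hbb]; exact heB _ _ hc2.2
    rw [ht, v1, v2] at h
    omega

variable (K : Type*) [Field K]

lemma mon_eq (D : WOGraph n) (a b : Fin n) :
    (X a * X b ^ D.w b : MvPoly n K) = monomial (eexp D a b) 1 := by
  have h1 : (X a : MvPoly n K) = monomial (Finsupp.single a 1) 1 := by
    rw [← X_pow_eq_monomial, pow_one]
  rw [h1, X_pow_eq_monomial, monomial_mul, one_mul, eexp]

lemma t_eq (D : WOGraph n) (i j r : Fin n) :
    (X i ^ D.w i * X j ^ D.w j * X r ^ D.w r : MvPoly n K) = monomial (triExp D i j r) 1 := by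
  rw [X_pow_eq_monomial, X_pow_eq_monomial, X_pow_eq_monomial, monomial_mul, monomial_mul,
    one_mul, one_mul, triExp]

lemma edgeIdealOn_eq (D : WOGraph n) (U : Set (Fin n)) :
    edgeIdealOn K D U = Ideal.span ((fun s => monomial s (1 : K)) ''
      {e | ∃ a b, a ∈ U ∧ b ∈ U ∧ D.adj a b ∧ e = eexp D a b}) := by
  unfold edgeIdealOn
  congr 1
  ext m
  simp only [Set.mem_image, Set.mem_setOf_eq]
  constructor
  · rintro ⟨a, b, ha, hb, hab, rfl⟩
    exact ⟨eexp D a b, ⟨a, b, ha, hb, hab, rfl⟩, (mon_eq K D a b).symm⟩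
  · rintro ⟨s, ⟨a, b, ha, hb, hab, rfl⟩, rfl⟩
    exact ⟨a, b, ha, hb, hab, (mon_eq K D a b).symm⟩

lemma sq_eq (D : WOGraph n) :
    (edgeIdeal K D) ^ 2 = Ideal.span ((fun s => monomial s (1 : K)) ''
      {e | ∃ a1 b1, D.adj a1 b1 ∧ ∃ a2 b2, D.adj a2 b2 ∧
        e = eexp D a1 b1 + eexp D a2 b2}) := by
  have h0 : edgeIdeal K D = edgeIdealOn K D Set.univ := rfl
  rw [h0, edgeIdealOn_eq, pow_two, Ideal.span_mul_span']
  congr 1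
  ext m
  simp only [Set.mem_mul, Set.mem_image, Set.mem_setOf_eq, Set.mem_univ, true_and]
  constructor
  · rintro ⟨x, ⟨s1, ⟨a1, b1, h1, rfl⟩, rfl⟩, y, ⟨s2, ⟨a2, b2, h2, rfl⟩, rfl⟩, rfl⟩
    exact ⟨_, ⟨a1, b1, h1, a2, b2, h2, rfl⟩, by rw [monomial_mul, one_mul]⟩
  · rintro ⟨s, ⟨a1, b1, h1, a2, b2, h2, rfl⟩, rfl⟩
    exact ⟨_, ⟨_, ⟨a1, b1, h1, rfl⟩, rfl⟩, _, ⟨_, ⟨a2, b2, h2, rfl⟩, rfl⟩,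
      by rw [monomial_mul, one_mul]⟩

lemma pows_eq (D : WOGraph n) (N : Set (Fin n)) :
    Ideal.span {m : MvPoly n K | ∃ x ∈ N, m = X x ^ D.w x} =
      Ideal.span ((fun s => monomial s (1 : K)) ''
        {e | ∃ x ∈ N, e = Finsupp.single x (D.w x)}) := by
  congr 1
  ext m
  simp only [Set.mem_image, Set.mem_setOf_eq]
  constructor
  · rintro ⟨x, hx, rfl⟩
    exact ⟨_, ⟨x, hx, rfl⟩, X_pow_eq_monomial.symm⟩
  · rintro ⟨s, ⟨x, hx, rfl⟩, rfl⟩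
    exact ⟨x, hx, X_pow_eq_monomial.symm⟩

end S18

/-- If `V⁺` are sinks and `T` is the principal ideal generated by
`x_i^{w_i} x_j^{w_j} x_r^{w_r}` for a triangle `{x_i,x_j,x_r}` of `G`, then
`(I^2 : T) = I(D∖N[supp T]) + (x^{w(x)} : x ∈ N[supp T])`. -/
theorem stmt18 {n : ℕ} (K : Type*) [Field K] (D : WOGraph n)
    (hsink : ∀ i ∈ D.Vplus, D.IsSink i)
    (i j r : Fin n) (htri : D.IsTriangle i j r) :
    Submodule.colon ((edgeIdeal K D) ^ 2)
        (Ideal.span {(X i ^ D.w i * X j ^ D.w j * X r ^ D.w r : MvPoly n K)}) =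
      edgeIdealOn K D (D.nbhd {i, j, r})ᶜ ⊔
        Ideal.span {m : MvPoly n K | ∃ x ∈ D.nbhd {i, j, r}, m = X x ^ D.w x} := by
  classical
  ext f
  rw [S18.t_eq, Ideal.mem_colon_span_singleton, S18.sq_eq, S18.edgeIdealOn_eq, S18.pows_eq,
    ← Ideal.span_union, ← Set.image_union, mem_ideal_span_monomial_image,
    mem_ideal_span_monomial_image]
  constructor
  · intro h e he
    have hmem : e + S18.triExp D i j r ∈
        (f * monomial (S18.triExp D i j r) (1 : K)).support := by
      rw [MvPolynomial.mem_support_iff, coeff_mul_monomial, mul_one]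
      exact MvPolynomial.mem_support_iff.mp he
    obtain ⟨s, ⟨a1, b1, h1, a2, b2, h2, rfl⟩, hsle⟩ := h _ hmem
    rcases S18.fwd D hsink i j r htri e a1 b1 a2 b2 h1 h2 hsle with
      ⟨a, b, ha, hb, hab, hle⟩ | ⟨x, hx, hle⟩
    · exact ⟨S18.eexp D a b, Set.mem_union_left _ ⟨a, b, ha, hb, hab, rfl⟩, hle⟩
    · exact ⟨Finsupp.single x (D.w x), Set.mem_union_right _ ⟨x, hx, rfl⟩, hle⟩
  · intro h d hd
    rw [MvPolynomial.mem_support_iff, coeff_mul_monomial'] at hd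
    by_cases hτ : S18.triExp D i j r ≤ d
    · rw [if_pos hτ, mul_one] at hd
      obtain ⟨s, hs, hsle⟩ := h _ (MvPolynomial.mem_support_iff.mpr hd)
      have hγ : (∃ a b, D.adj a b ∧ s = S18.eexp D a b) ∨
          (∃ x ∈ D.nbhd {i, j, r}, s = Finsupp.single x (D.w x)) := by
        rcases hs with ⟨a, b, _, _, hab, rfl⟩ | ⟨x, hx, rfl⟩
        · exact Or.inl ⟨a, b, hab, rfl⟩
        · exact Or.inr ⟨x, hx, rfl⟩
      obtain ⟨a1, b1, h1, a2, b2, h2, hle2⟩ := S18.bwd D i j r htri s hγ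
      refine ⟨S18.eexp D a1 b1 + S18.eexp D a2 b2, ⟨a1, b1, h1, a2, b2, h2, rfl⟩, ?_⟩
      calc S18.eexp D a1 b1 + S18.eexp D a2 b2 ≤ s + S18.triExp D i j r := hle2
        _ ≤ (d - S18.triExp D i j r) + S18.triExp D i j r := add_le_add_left hsle _
        _ = d := tsub_add_cancel_of_le hτ
    · rw [if_neg hτ] at hd
      exact absurd rfl hd
end
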